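/- (Exactness of tree-based decomposition.) The optimal value of the tree-based LP equals the optimal value of the source-based (and hence edge-based) multi-commodity flow LP, provided the source-based LP is feasible: every extreme point of the per-source flow polytope {f^s >= 0 : conservation with outflow sum_{k in K_s} d_k at s and inflow d_k at t_k} whose support is acyclic can be decomposed using trees, and conversely convex combinations of tree flows are feasible per-source flows; when the per-source polytope is rewritten via Dantzig–Wolfe with its extreme points, the resulting master LP is the tree-based LP. -/

import Mathlib

inductive IsWalk {V E : Type} (src dst : E → V) : V → V → List E → Prop
  | nil (v : V) : IsWalk src dst v v []
  | cons {v u : V} {e : E} {l : List E} (hsrc : src e = v)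
      (htail : IsWalk src dst (dst e) u l) : IsWalk src dst v u (e :: l)

def diverg {V E : Type} [Fintype E] [DecidableEq V] (src dst : E → V)
    (f : E → ℝ) (v : V) : ℝ :=
  ∑ e ∈ Finset.univ.filter (fun e => src e = v), f e
    - ∑ e ∈ Finset.univ.filter (fun e => dst e = v), f e

def SourceFeasible {V E K : Type} [Fintype V] [Fintype E] [Fintype K]
    [DecidableEq V] (src dst : E → V) (u : E → ℝ) (sk tk : K → V) (d : K → ℝ)
    (g : V → E → ℝ) : Prop :=
  (∀ s e, 0 ≤ g s e) ∧
  (∀ s : V, s ∉ Finset.image sk Finset.univ → g s = 0) ∧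
  (∀ s ∈ Finset.image sk Finset.univ, ∀ i : V,
      diverg src dst (g s) i =
        (if i = s then ∑ k ∈ Finset.univ.filter (fun k => sk k = s), d k else 0)
          - ∑ k ∈ Finset.univ.filter (fun k => sk k = s ∧ tk k = i), d k) ∧
  (∀ e, ∑ s, g s e ≤ u e)

/-- An out-tree rooted at `s` containing all nodes of `T`: for each `t ∈ T`
there is a (simple) walk `pathTo t` from `s` to `t` inside `edges`, and it is
the unique walk from `s` to `t` using only edges of the tree. -/
structure OutTree {V E : Type} (src dst : E → V) (s : V) (T : Set V) where
  edges : Finset E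
  pathTo : V → List E
  walk_pathTo : ∀ t ∈ T, IsWalk src dst s t (pathTo t)
  mem_edges : ∀ t ∈ T, ∀ e ∈ pathTo t, e ∈ edges
  nodup_verts : ∀ t ∈ T, (s :: (pathTo t).map dst).Nodup
  unique_walk : ∀ t ∈ T, ∀ l : List E, (∀ e ∈ l, e ∈ edges) →
      IsWalk src dst s t l → l = pathTo t

/-- The sinks of all commodities with source `s`. -/
def sinkSet {V K : Type} (sk tk : K → V) (s : V) : Set V :=
  {v | ∃ k, sk k = s ∧ tk k = v}

/-- `fbar^e_τ = ∑_{k ∈ K_s} d_k·[e on the tree path from s to t_k]`. -/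
def fbarT {V E K : Type} [Fintype K] [DecidableEq V] [DecidableEq E]
    (src dst : E → V) (sk tk : K → V) (d : K → ℝ) (s : V)
    (τ : OutTree src dst s (sinkSet sk tk s)) (e : E) : ℝ :=
  ∑ k ∈ Finset.univ.filter (fun k => sk k = s),
    if e ∈ τ.pathTo (tk k) then d k else 0
namespace MyProof
variable {V E : Type} (src dst : E → V)

/-- tail vertex of an undirected step -/
def tV (p : E × Bool) : V := if p.2 then src p.1 else dst p.1
/-- head vertex of an undirected step -/
def hV (p : E × Bool) : V := if p.2 then dst p.1 else src p.1

inductive UWalk : V → V → List (E × Bool) → Prop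
  | nil (v : V) : UWalk v v []
  | cons {v u : V} {p : E × Bool} {l : List (E × Bool)} (h1 : tV src dst p = v)
      (h2 : UWalk (hV src dst p) u l) : UWalk v u (p :: l)

variable {src dst}

theorem IsWalk.append {a b c : V} {l1 l2 : List E} (h1 : IsWalk src dst a b l1)
    (h2 : IsWalk src dst b c l2) : IsWalk src dst a c (l1 ++ l2) := by
  induction h1 with
  | nil => simpa
  | cons hsrc htail ih => exact IsWalk.cons hsrc (ih h2)

theorem IsWalk.split {a c : V} {l1 l2 : List E} (h : IsWalk src dst a c (l1 ++ l2)) :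
    ∃ b, IsWalk src dst a b l1 ∧ IsWalk src dst b c l2 := by
  induction l1 generalizing a with
  | nil => exact ⟨a, IsWalk.nil a, h⟩
  | cons e t ih =>
      cases h with
      | cons hsrc htail =>
          obtain ⟨b, hb1, hb2⟩ := ih htail
          exact ⟨b, IsWalk.cons hsrc hb1, hb2⟩

theorem UWalk.append {a b c : V} {l1 l2 : List (E × Bool)} (h1 : UWalk src dst a b l1)
    (h2 : UWalk src dst b c l2) : UWalk src dst a c (l1 ++ l2) := by
  induction h1 with
  | nil => simpa
  | cons hh ht ih => exact UWalk.cons hh (ih h2)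

theorem UWalk.split {a c : V} {l1 l2 : List (E × Bool)}
    (h : UWalk src dst a c (l1 ++ l2)) :
    ∃ b, UWalk src dst a b l1 ∧ UWalk src dst b c l2 := by
  induction l1 generalizing a with
  | nil => exact ⟨a, UWalk.nil a, h⟩
  | cons p t ih =>
      cases h with
      | cons hh ht =>
          obtain ⟨b, hb1, hb2⟩ := ih ht
          exact ⟨b, UWalk.cons hh hb1, hb2⟩

/-- reverse of an undirected walk -/
def urev (L : List (E × Bool)) : List (E × Bool) := (L.map (fun p => (p.1, !p.2))).reverse

theorem UWalk.rev {a b : V} {L : List (E × Bool)} (h : UWalk src dst a b L) :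
    UWalk src dst b a (urev L) := by
  induction h with
  | nil v => exact UWalk.nil v
  | @cons v u p l h1 h2 ih =>
      have e1 : tV src dst (p.1, !p.2) = hV src dst p := by
        simp only [tV, hV]; cases p.2 <;> simp
      have e2 : hV src dst (p.1, !p.2) = tV src dst p := by
        simp only [tV, hV]; cases p.2 <;> simp
      have hstep : UWalk src dst (hV src dst p) (tV src dst p) [(p.1, !p.2)] := by
        refine UWalk.cons e1 ?_
        rw [e2]; exact UWalk.nil _
      subst h1
      simpa [urev] using ih.append hstep

theorem isWalk_to_uwalk {a b : V} {l : List E} (h : IsWalk src dst a b l) :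
    UWalk src dst a b (l.map (fun e => (e, true))) := by
  induction h with
  | nil v => exact UWalk.nil v
  | cons hsrc htail ih =>
      exact UWalk.cons (by simpa [tV]) (by simpa [hV] using ih)

theorem uwalk_nil_eq {a b : V} (h : UWalk src dst a b []) : a = b := by
  cases h; rfl

/-- Reduction of an undirected walk to one with no repeated edges. -/
theorem uwalk_reduce {a b : V} : ∀ L : List (E × Bool), UWalk src dst a b L →
    ∃ L' : List (E × Bool), UWalk src dst a b L' ∧ (L'.map Prod.fst).Nodup ∧
      (∀ p ∈ L', p ∈ L) ∧ ((∀ p ∈ L, p.2 = true) → L ≠ [] → L' ≠ []) := by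
  intro L
  induction L generalizing a with
  | nil => intro h; exact ⟨[], h, by simp, by simp, by simp⟩
  | cons p M ih =>
      intro h
      cases h with
      | cons h1 h2 =>
        obtain ⟨M', hw, hnd, hsub, hne⟩ := ih h2
        by_cases hmem : p.1 ∈ M'.map Prod.fst
        · -- find the occurrence
          obtain ⟨q, hqM, hq1⟩ := List.mem_map.mp hmem
          obtain ⟨Q1, Q2, hq⟩ := List.append_of_mem hqM
          subst hq
          obtain ⟨m, hm1, hm2⟩ := hw.split
          cases hm2 with
          | @cons _ _ _ _ hq2 hq3 =>
            by_cases hbb : q.2 = p.2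
            · -- same direction: q = p, take q :: Q2 from a
              have hqp : q = p := Prod.ext hq1 hbb
              refine ⟨q :: Q2, ?_, ?_, ?_, by simp⟩
              · refine UWalk.cons ?_ hq3
                rw [hqp]; exact h1
              · have : ((Q1 ++ q :: Q2).map Prod.fst).Nodup := hnd
                simp only [List.map_append, List.map_cons] at this
                exact (List.nodup_append.mp this).2.1
              · intro r hr
                rcases List.mem_cons.mp hr with h' | h'
                · subst h'; rw [hqp]; simp
                · exact List.mem_cons_of_mem p (hsub r (by simp [h']))
            · -- opposite direction: hV q = tV p's...  Q2 starts at a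
              have hq2' : hV src dst q = tV src dst p := by
                simp only [tV, hV, hq1]
                cases hp2 : p.2 <;> cases hq2' : q.2 <;>
                  simp_all
              refine ⟨Q2, ?_, ?_, ?_, ?_⟩
              · rw [hq2', h1] at hq3; exact hq3
              · have : ((Q1 ++ q :: Q2).map Prod.fst).Nodup := hnd
                simp only [List.map_append, List.map_cons] at this
                exact ((List.nodup_append.mp this).2.1).of_cons
              · intro r hr; exact List.mem_cons_of_mem p (hsub r (by simp [hr]))
              · intro hall _
                exfalso
                have h1' : p.2 = true := hall p (by simp)
                have h2' : q.2 = true := hall q (List.mem_cons_of_mem p (hsub q (by simp)))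
                rw [h1', h2'] at hbb; exact hbb rfl
        · refine ⟨p :: M', UWalk.cons h1 hw, by simp [hnd, hmem], ?_, by simp⟩
          intro r hr
          rcases List.mem_cons.mp hr with h' | h'
          · simp [h']
          · exact List.mem_cons_of_mem p (hsub r h')


variable (src dst)

/-- No undirected cycle with edges in `A`. -/
def NoUCycle (A : Finset E) : Prop :=
  ¬ ∃ (v : V) (L : List (E × Bool)), L ≠ [] ∧ UWalk src dst v v L ∧
      (∀ p ∈ L, p.1 ∈ A) ∧ (L.map Prod.fst).Nodup

variable {src dst}

theorem no_closed_walk {A : Finset E} (hNC : NoUCycle src dst A) {v : V} {l : List E}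
    (hw : IsWalk src dst v v l) (hA : ∀ e ∈ l, e ∈ A) : l = [] := by
  by_contra hne
  obtain ⟨L', hw', hnd', hsub', hne'⟩ := uwalk_reduce _ (isWalk_to_uwalk hw)
  refine hNC ⟨v, L', ?_, hw', ?_, hnd'⟩
  · exact hne' (by simp) (by simpa using hne)
  · intro p hp
    have := hsub' p hp
    obtain ⟨e, he, rfl⟩ := List.mem_map.mp this
    exact hA e he

theorem walk_simple {A : Finset E} (hNC : NoUCycle src dst A) {a b : V} {l : List E}
    (hw : IsWalk src dst a b l) (hA : ∀ e ∈ l, e ∈ A) : (a :: l.map dst).Nodup := by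
  induction hw with
  | nil v => simp
  | @cons v u e r hsrc htail ih =>
      have ihn := ih (fun e' he' => hA e' (List.mem_cons_of_mem e he'))
      refine List.nodup_cons.mpr ⟨?_, ihn⟩
      intro hv
      have hv' : v ∈ (e :: r).map dst := by simpa using hv
      obtain ⟨e', he', hde'⟩ := List.mem_map.mp hv'
      obtain ⟨P, Q, hPQ⟩ := List.append_of_mem he'
      have hw0 : IsWalk src dst v u (e :: r) := IsWalk.cons hsrc htail
      rw [hPQ] at hw0
      obtain ⟨m, hm1, hm2⟩ := IsWalk.split hw0
      cases hm2 with
      | cons hsrc2 htail2 =>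
        have hclosed : IsWalk src dst v v (P ++ [e']) :=
          IsWalk.append hm1 (by rw [← hde']; exact IsWalk.cons hsrc2 (IsWalk.nil _))
        have : P ++ [e'] = [] := by
          refine no_closed_walk hNC hclosed ?_
          intro x hx
          refine hA x ?_
          rw [hPQ]
          rcases List.mem_append.mp hx with h | h
          · exact List.mem_append.mpr (Or.inl h)
          · simp at h; subst h; simp
        simp at this

theorem mem_fst_urev {L : List (E × Bool)} {p : E × Bool} (hp : p ∈ urev L) :
    p.1 ∈ L.map Prod.fst := by
  simp only [urev, List.mem_reverse, List.mem_map] at hp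
  obtain ⟨q, hq, rfl⟩ := hp
  exact List.mem_map.mpr ⟨q, hq, rfl⟩

theorem walk_unique {A : Finset E} (hNC : NoUCycle src dst A) {t : V} :
    ∀ (l1 : List E) {s : V} (l2 : List E), IsWalk src dst s t l1 → (∀ e ∈ l1, e ∈ A) →
      IsWalk src dst s t l2 → (∀ e ∈ l2, e ∈ A) → l1 = l2 := by
  intro l1
  induction l1 with
  | nil =>
      intro s l2 h1 hA1 h2 hA2
      cases h1
      exact (no_closed_walk hNC h2 hA2).symm
  | cons e1 r1 ih =>
      intro s l2 h1 hA1 h2 hA2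
      cases h1 with
      | cons hsrc1 htail1 =>
      cases l2 with
      | nil =>
          cases h2
          exact absurd (no_closed_walk hNC (IsWalk.cons hsrc1 htail1) hA1) (by simp)
      | cons e2 r2 =>
          cases h2 with
          | cons hsrc2 htail2 =>
          by_cases he : e1 = e2
          · subst he
            have := ih r2 htail1 (fun x hx => hA1 x (List.mem_cons_of_mem _ hx))
              htail2 (fun x hx => hA2 x (List.mem_cons_of_mem _ hx))
            rw [this]
          · exfalso
            have hsim1 := walk_simple hNC (IsWalk.cons hsrc1 htail1) hA1
            have hsne : s ≠ dst e1 := by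
              have := (List.nodup_cons.mp hsim1).1
              intro h; exact this (by simp [← h])
            have he1r1 : e1 ∉ r1 := by
              have h2' := (List.nodup_cons.mp hsim1).2
              simp only [List.map_cons, List.nodup_cons] at h2'
              intro hmem
              exact h2'.1 (List.mem_map.mpr ⟨e1, hmem, rfl⟩)
            by_cases hmem : e1 ∈ r2
            · obtain ⟨P, Q, hPQ⟩ := List.append_of_mem hmem
              have hw0 : IsWalk src dst s t ((e2 :: P) ++ e1 :: Q) := by
                have hh := IsWalk.cons hsrc2 htail2
                rw [hPQ] at hh
                simpa using hh
              obtain ⟨m, hm1, hm2⟩ := IsWalk.split hw0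
              cases hm2 with
              | cons hsrcm htailm =>
                have hms : m = s := by rw [← hsrcm, hsrc1]
                subst hms
                have := no_closed_walk hNC hm1 (fun x hx => by
                  refine hA2 x ?_
                  rcases List.mem_cons.mp hx with h | h
                  · simp [h]
                  · refine List.mem_cons_of_mem _ ?_
                    rw [hPQ]
                    exact List.mem_append.mpr (Or.inl h))
                simp at this
            · have w1 : UWalk src dst (dst e1) t (r1.map (fun e => (e, true))) :=
                isWalk_to_uwalk htail1
              have w2 : UWalk src dst t s
                  (urev ((e2 :: r2).map (fun e => (e, true)))) :=
                (isWalk_to_uwalk (IsWalk.cons hsrc2 htail2)).rev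
              obtain ⟨L', hw', hnd', hsub', _⟩ := uwalk_reduce _ (w1.append w2)
              have hLne : L' ≠ [] := by
                intro h; subst h
                exact hsne (uwalk_nil_eq hw').symm
              have hfst : ∀ p ∈ L', p.1 ∈ A ∧ p.1 ≠ e1 := by
                intro p hp
                rcases List.mem_append.mp (hsub' p hp) with h | h
                · obtain ⟨x, hx, rfl⟩ := List.mem_map.mp h
                  exact ⟨hA1 x (List.mem_cons_of_mem _ hx), fun hh => he1r1 (hh ▸ hx)⟩
                · have := mem_fst_urev h
                  simp only [List.map_map] at this
                  have : p.1 ∈ (e2 :: r2) := by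
                    simpa using this
                  rcases List.mem_cons.mp this with h' | h'
                  · exact ⟨hA2 _ (by simp [h']), fun hh => he (hh.symm ▸ h'.symm ▸ rfl)⟩
                  · exact ⟨hA2 _ (List.mem_cons_of_mem _ h'), fun hh => hmem (hh ▸ h')⟩
              refine hNC ⟨s, (e1, true) :: L', by simp, ?_, ?_, ?_⟩
              · exact UWalk.cons (by simpa [tV]) (by simpa [hV] using hw')
              · intro p hp
                rcases List.mem_cons.mp hp with h | h
                · subst h; exact hA1 e1 (by simp)
                · exact (hfst p h).1
              · simp only [List.map_cons, List.nodup_cons]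
                refine ⟨?_, hnd'⟩
                intro hmm
                obtain ⟨p, hp, hp1⟩ := List.mem_map.mp hmm
                exact (hfst p hp).2 hp1

section Diverg
variable [Fintype E] [DecidableEq V]

theorem diverg_add (f g : E → ℝ) (v : V) :
    diverg src dst (fun e => f e + g e) v = diverg src dst f v + diverg src dst g v := by
  simp only [diverg, Finset.sum_add_distrib]; ring

theorem diverg_mul (c : ℝ) (f : E → ℝ) (v : V) :
    diverg src dst (fun e => c * f e) v = c * diverg src dst f v := by
  simp only [diverg, ← Finset.mul_sum]; ring

theorem diverg_finsum {ι : Type} (sf : Finset ι) (F : ι → E → ℝ) (v : V) :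
    diverg src dst (fun e => ∑ k ∈ sf, F k e) v = ∑ k ∈ sf, diverg src dst (F k) v := by
  simp only [diverg]
  rw [Finset.sum_comm (s := Finset.univ.filter (fun e => src e = v)),
      Finset.sum_comm (s := Finset.univ.filter (fun e => dst e = v)),
      Finset.sum_sub_distrib]

theorem diverg_single [DecidableEq E] (e : E) (c : ℝ) (v : V) :
    diverg src dst (fun e' => if e' = e then c else 0) v
      = (if src e = v then c else 0) - (if dst e = v then c else 0) := by
  simp only [diverg, Finset.sum_ite_eq', Finset.mem_filter, Finset.mem_univ, true_and]

theorem cut_sum (f : E → ℝ) (R : Finset V) :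
    ∑ v ∈ R, diverg src dst f v
      = ∑ e, ((if src e ∈ R ∧ dst e ∉ R then f e else 0)
          - (if src e ∉ R ∧ dst e ∈ R then f e else 0)) := by
  have h1 : ∀ g : E → V,
      ∑ v ∈ R, ∑ e ∈ Finset.univ.filter (fun e => g e = v), f e
        = ∑ e, if g e ∈ R then f e else 0 := by
    intro g
    have : ∀ v, ∑ e ∈ Finset.univ.filter (fun e => g e = v), f e
        = ∑ e, if g e = v then f e else 0 := by
      intro v; rw [Finset.sum_filter]
    simp_rw [this]
    rw [Finset.sum_comm]
    congr 1; funext e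
    exact Finset.sum_ite_eq R (g e) (fun _ => f e)
  simp only [diverg, Finset.sum_sub_distrib]
  rw [h1 src, h1 dst, ← Finset.sum_sub_distrib, ← Finset.sum_sub_distrib]
  refine Finset.sum_congr rfl fun e _ => ?_
  by_cases hA : src e ∈ R <;> by_cases hB : dst e ∈ R <;> simp [hA, hB]

end Diverg

section Delta
variable [Fintype E] [DecidableEq V] [DecidableEq E]

/-- signed indicator of an undirected walk (with no repeated edges) -/
def delta (L : List (E × Bool)) (e : E) : ℝ :=
  (if (e, true) ∈ L then 1 else 0) - (if (e, false) ∈ L then 1 else 0)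

theorem delta_cons {p : E × Bool} {l : List (E × Bool)} (hp : p.1 ∉ l.map Prod.fst) :
    delta (p :: l) = fun e =>
      (if e = p.1 then (if p.2 then (1:ℝ) else -1) else 0) + delta l e := by
  obtain ⟨pe, pb⟩ := p
  simp only at hp
  funext e
  have hnotin : ∀ σ : Bool, (pe, σ) ∉ l := by
    intro σ hσ; exact hp (List.mem_map.mpr ⟨_, hσ, rfl⟩)
  by_cases hep : e = pe
  · subst hep
    have hmem : ∀ σ : Bool, (((e, σ) : E × Bool) ∈ (e, pb) :: l) ↔ pb = σ := by
      intro σ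
      rw [List.mem_cons]
      constructor
      · rintro (h | h)
        · exact ((Prod.mk.injEq _ _ _ _ ▸ h : e = e ∧ σ = pb).2).symm
        · exact absurd h (hnotin σ)
      · intro h; left; rw [← h]
    have t1 : (((e, true) : E × Bool) ∈ l) = False := eq_false (hnotin true)
    have t2 : (((e, false) : E × Bool) ∈ l) = False := eq_false (hnotin false)
    simp only [delta, hmem, t1, t2, if_pos rfl]
    cases pb <;> simp
  · have hmem : ∀ σ : Bool, (((e, σ) : E × Bool) ∈ (pe, pb) :: l) ↔ ((e, σ) ∈ l) := by
      intro σ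
      rw [List.mem_cons]
      constructor
      · rintro (h | h)
        · exact absurd (congrArg Prod.fst h) hep
        · exact h
      · exact Or.inr
    simp only [delta, hmem, if_neg hep, zero_add]

theorem diverg_delta {a b : V} {L : List (E × Bool)} (h : UWalk src dst a b L)
    (hnd : (L.map Prod.fst).Nodup) (v : V) :
    diverg src dst (delta L) v = (if a = v then 1 else 0) - (if b = v then 1 else 0) := by
  induction h with
  | nil w => simp [delta, diverg]
  | @cons w u p l h1 h2 ih =>
      obtain ⟨pe, pb⟩ := p
      simp only [List.map_cons, List.nodup_cons] at hnd
      rw [delta_cons hnd.1, diverg_add, diverg_single, ih hnd.2]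
      subst h1
      simp only [tV, hV] at h2 ⊢
      cases pb <;>
        by_cases hs : src pe = v <;> by_cases hd : dst pe = v <;>
          by_cases hb : u = v <;> simp_all

theorem diverg_walk_ind {a b : V} {l : List E} (h : IsWalk src dst a b l)
    (hnd : l.Nodup) (c : ℝ) (v : V) :
    diverg src dst (fun e => if e ∈ l then c else 0) v
      = (if a = v then c else 0) - (if b = v then c else 0) := by
  induction h with
  | nil w => simp [diverg]
  | @cons w u e r hsrc htail ih =>
      have hnd' := List.nodup_cons.mp hnd
      have key : (fun e' => if e' ∈ e :: r then c else 0)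
          = fun e' => (if e' = e then c else 0) + (if e' ∈ r then c else 0) := by
        funext e'
        by_cases h1 : e' = e
        · subst h1; simp [hnd'.1]
        · simp [h1]
      rw [key, diverg_add, diverg_single, ih hnd'.2, hsrc]
      ring

end Delta

section Reach
variable [Fintype V] [Fintype E] [DecidableEq V] [DecidableEq E]

open Classical in
noncomputable def supp (f : E → ℝ) : Finset E :=
  Finset.univ.filter (fun e => f e ≠ 0)

theorem mem_supp {f : E → ℝ} {e : E} : e ∈ supp f ↔ f e ≠ 0 := by
  classical
  simp [supp]

theorem exists_walk_to_sink {f : E → ℝ} (hf0 : ∀ e, 0 ≤ f e) {s t : V}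
    (hneg : ∀ v, v ≠ s → diverg src dst f v ≤ 0) (ht : diverg src dst f t < 0) :
    ∃ l, IsWalk src dst s t l ∧ ∀ e ∈ l, e ∈ supp f := by
  classical
  set R : Finset V := Finset.univ.filter
    (fun v => ∃ l, IsWalk src dst v t l ∧ ∀ e ∈ l, e ∈ supp f) with hR
  have htR : t ∈ R := by
    simp only [hR, Finset.mem_filter, Finset.mem_univ, true_and]
    exact ⟨[], IsWalk.nil t, by simp⟩
  have hclose : ∀ e, f e ≠ 0 → dst e ∈ R → src e ∈ R := by
    intro e hfe hdst
    simp only [hR, Finset.mem_filter, Finset.mem_univ, true_and] at hdst ⊢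
    obtain ⟨l, hl, hle⟩ := hdst
    refine ⟨e :: l, IsWalk.cons rfl hl, ?_⟩
    intro x hx
    rcases List.mem_cons.mp hx with h | h
    · subst h; exact mem_supp.mpr hfe
    · exact hle x h
  have hge : 0 ≤ ∑ v ∈ R, diverg src dst f v := by
    rw [cut_sum]
    apply Finset.sum_nonneg
    intro e _
    by_cases hfe : f e = 0
    · simp [hfe]
    · have h2 : ¬ (src e ∉ R ∧ dst e ∈ R) := fun h => h.1 (hclose e hfe h.2)
      rw [if_neg h2]
      by_cases h3 : src e ∈ R ∧ dst e ∉ R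
      · rw [if_pos h3]; simpa using hf0 e
      · rw [if_neg h3]; simp
  by_cases hs : s ∈ R
  · simp only [hR, Finset.mem_filter, Finset.mem_univ, true_and] at hs; exact hs
  · exfalso
    have h1 : ∑ v ∈ R.erase t, diverg src dst f v ≤ 0 :=
      Finset.sum_nonpos (fun v hv => hneg v (by
        intro h; subst h; exact hs (Finset.mem_of_mem_erase hv)))
    have h2 := Finset.add_sum_erase R (fun v => diverg src dst f v) htR
    linarith

variable (src dst) in
def UReach (A : Finset E) (a b : V) : Prop :=
  ∃ L, UWalk src dst a b L ∧ ∀ p ∈ L, p.1 ∈ A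

theorem UReach.refl (A : Finset E) (a : V) : UReach src dst A a a :=
  ⟨[], UWalk.nil a, by simp⟩

theorem UReach.trans {A : Finset E} {a b c : V} (h1 : UReach src dst A a b)
    (h2 : UReach src dst A b c) : UReach src dst A a c := by
  obtain ⟨L1, hw1, hA1⟩ := h1
  obtain ⟨L2, hw2, hA2⟩ := h2
  refine ⟨L1 ++ L2, hw1.append hw2, ?_⟩
  intro p hp
  rcases List.mem_append.mp hp with h | h
  · exact hA1 p h
  · exact hA2 p h

theorem UReach.symm {A : Finset E} {a b : V} (h : UReach src dst A a b) :
    UReach src dst A b a := by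
  obtain ⟨L, hw, hA⟩ := h
  refine ⟨urev L, hw.rev, ?_⟩
  intro p hp
  obtain ⟨q, hq, hq1⟩ := List.mem_map.mp (mem_fst_urev hp)
  rw [← hq1]; exact hA q hq

theorem UReach.step {A : Finset E} {e : E} (he : e ∈ A) :
    UReach src dst A (src e) (dst e) := by
  refine ⟨[(e, true)], ?_, by simpa⟩
  refine UWalk.cons (by simp [tV]) ?_
  simp only [hV, if_pos rfl]
  exact UWalk.nil _

end Reach

section BaseCase
variable [Fintype V] [Fintype E] [DecidableEq V] [DecidableEq E]
variable {K : Type} [Fintype K]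

theorem exists_tree (sk tk : K → V) (d : K → ℝ)
    (hd : ∀ k, 0 < d k) (hst : ∀ k, tk k ≠ sk k) (s : V) (f : E → ℝ)
    (hf0 : ∀ e, 0 ≤ f e)
    (hdiv : ∀ i, diverg src dst f i =
      (if i = s then ∑ k ∈ Finset.univ.filter (fun k => sk k = s), d k else 0)
        - ∑ k ∈ Finset.univ.filter (fun k => sk k = s ∧ tk k = i), d k)
    (hNC : NoUCycle src dst (supp f)) :
    ∃ τ : OutTree src dst s (sinkSet sk tk s),
      ∀ e, fbarT src dst sk tk d s τ e ≤ f e := by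
  classical
  set A := supp f with hA
  set dem : V → ℝ :=
    fun i => ∑ k ∈ Finset.univ.filter (fun k => sk k = s ∧ tk k = i), d k with hdem
  have hdem0 : ∀ i, 0 ≤ dem i :=
    fun i => Finset.sum_nonneg (fun k _ => (hd k).le)
  have hdivneg : ∀ v, v ≠ s → diverg src dst f v ≤ 0 := by
    intro v hv
    rw [hdiv v, if_neg hv]
    have := hdem0 v
    rw [hdem] at this
    linarith
  have hsink : ∀ t ∈ sinkSet sk tk s, diverg src dst f t < 0 ∧ t ≠ s := by
    rintro t ⟨k, hks, hkt⟩
    have hts : t ≠ s := by rw [← hkt, ← hks]; exact hst k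
    have h1 : d k ≤ dem t := by
      rw [hdem]
      exact Finset.single_le_sum (fun k _ => (hd k).le)
        (Finset.mem_filter.mpr ⟨Finset.mem_univ k, hks, hkt⟩)
    refine ⟨?_, hts⟩
    rw [hdiv t, if_neg hts]
    have := hd k
    rw [hdem] at h1
    linarith
  have hpath : ∀ t ∈ sinkSet sk tk s, ∃ l, IsWalk src dst s t l ∧ ∀ e ∈ l, e ∈ A :=
    fun t ht => exists_walk_to_sink hf0 hdivneg (hsink t ht).1
  let pF : V → List E := fun t =>
    if h : t ∈ sinkSet sk tk s then (hpath t h).choose else []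
  have pwalk : ∀ t, t ∈ sinkSet sk tk s → IsWalk src dst s t (pF t) := by
    intro t ht
    show IsWalk src dst s t (if h : t ∈ sinkSet sk tk s then (hpath t h).choose else [])
    rw [dif_pos ht]
    exact (hpath t ht).choose_spec.1
  have pmem : ∀ t, t ∈ sinkSet sk tk s → ∀ e ∈ pF t, e ∈ A := by
    intro t ht
    show ∀ e ∈ (if h : t ∈ sinkSet sk tk s then (hpath t h).choose else []), e ∈ A
    rw [dif_pos ht]
    exact (hpath t ht).choose_spec.2
  refine ⟨{ edges := A, pathTo := pF,
            walk_pathTo := pwalk,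
            mem_edges := pmem,
            nodup_verts := fun t ht => walk_simple hNC (pwalk t ht) (pmem t ht),
            unique_walk := fun t ht l hlA hl =>
              walk_unique hNC l (pF t) hl hlA (pwalk t ht) (pmem t ht) }, ?_⟩
  intro e
  show (∑ k ∈ Finset.univ.filter (fun k => sk k = s),
      if e ∈ pF (tk k) then d k else 0) ≤ f e
  by_cases huse : ∃ k, sk k = s ∧ e ∈ pF (tk k)
  swap
  · have hz : (∑ k ∈ Finset.univ.filter (fun k => sk k = s),
        if e ∈ pF (tk k) then d k else 0) = 0 := by
      apply Finset.sum_eq_zero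
      intro k hk
      rw [if_neg]
      intro hmem
      exact huse ⟨k, (Finset.mem_filter.mp hk).2, hmem⟩
    rw [hz]; exact hf0 e
  obtain ⟨k0, hk0s, hk0e⟩ := huse
  have htk0 : tk k0 ∈ sinkSet sk tk s := ⟨k0, hk0s, rfl⟩
  have heA : e ∈ A := pmem _ htk0 e hk0e
  have hsl : src e ≠ dst e := by
    intro h
    apply hNC
    refine ⟨src e, [(e, true)], by simp, ?_, by simpa using heA, by simp⟩
    refine UWalk.cons (by simp [tV]) ?_
    simp only [hV, if_pos rfl]
    rw [← h]; exact UWalk.nil _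
  set R : Finset V :=
    Finset.univ.filter (fun v => UReach src dst (A.erase e) (dst e) v) with hRdef
  have hmemR : ∀ v, v ∈ R ↔ UReach src dst (A.erase e) (dst e) v := by
    intro v; simp [hRdef]
  have hdstR : dst e ∈ R := (hmemR _).mpr (UReach.refl _ _)
  have hsrcR : src e ∉ R := by
    intro hmem
    obtain ⟨L, hw, hLA⟩ := (hmemR _).mp hmem
    obtain ⟨L', hw', hnd', hsub', _⟩ := uwalk_reduce L hw
    have hL'A : ∀ p ∈ L', p.1 ∈ A.erase e := fun p hp => hLA p (hsub' p hp)
    have hL'ne : L' ≠ [] := by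
      intro h
      subst h
      exact hsl (uwalk_nil_eq hw').symm
    apply hNC
    refine ⟨dst e, L' ++ [(e, true)], by simp, ?_, ?_, ?_⟩
    · refine hw'.append ?_
      refine UWalk.cons (by simp [tV]) ?_
      simp only [hV, if_pos rfl]
      exact UWalk.nil _
    · intro p hp
      rcases List.mem_append.mp hp with h | h
      · exact Finset.mem_of_mem_erase (hL'A p h)
      · simp at h; rw [h]; exact heA
    · rw [List.map_append]
      refine List.Nodup.append hnd' (by simp) ?_
      intro x hx hx2
      simp at hx2
      subst hx2
      obtain ⟨p, hp, hp1⟩ := List.mem_map.mp hx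
      have := hL'A p hp
      rw [hp1] at this
      exact (Finset.mem_erase.mp this).1 rfl
  have hcl : ∀ e', e' ∈ A.erase e → (src e' ∈ R ↔ dst e' ∈ R) := by
    intro e' he'
    rw [hmemR, hmemR]
    constructor
    · intro h; exact h.trans (UReach.step he')
    · intro h; exact h.trans (UReach.step he').symm
  obtain ⟨P, Q, hPQ⟩ := List.append_of_mem hk0e
  have hw0 := pwalk _ htk0
  rw [hPQ] at hw0
  obtain ⟨m, hmP, hmQ⟩ := IsWalk.split hw0
  have hnd0 := walk_simple hNC (pwalk _ htk0) (pmem _ htk0)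
  rw [hPQ] at hnd0
  have hdstnotin : dst e ∉ (P.map dst) ∧ dst e ∉ (Q.map dst) := by
    have h2 := (List.nodup_cons.mp hnd0).2
    rw [List.map_append, List.map_cons] at h2
    obtain ⟨hL, hRg, hdisj⟩ := List.nodup_append'.mp h2
    constructor
    · intro hmem
      exact hdisj hmem (by simp)
    · exact (List.nodup_cons.mp hRg).1
  have heP : e ∉ P := fun h => hdstnotin.1 (List.mem_map.mpr ⟨e, h, rfl⟩)
  have heQ : e ∉ Q := fun h => hdstnotin.2 (List.mem_map.mpr ⟨e, h, rfl⟩)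
  cases hmQ with
  | cons hsrcm htailm =>
  -- here m = src e (hsrcm : src e = m), htailm : IsWalk (dst e) (tk k0) Q
  have hsR : s ∉ R := by
    intro hsmem
    have h1 : UReach src dst (A.erase e) s (src e) := by
      refine ⟨P.map (fun x => (x, true)), by rw [hsrcm]; exact isWalk_to_uwalk hmP, ?_⟩
      intro p hp
      obtain ⟨x, hx, rfl⟩ := List.mem_map.mp hp
      refine Finset.mem_erase.mpr ⟨fun hxe => heP (hxe ▸ hx), ?_⟩
      refine pmem _ htk0 x ?_
      rw [hPQ]; exact List.mem_append.mpr (Or.inl hx)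
    exact hsrcR ((hmemR _).mpr (((hmemR _).mp hsmem).trans h1))
  have hsinkR : ∀ k, sk k = s → e ∈ pF (tk k) → tk k ∈ R := by
    intro k hks hek
    have htkk : tk k ∈ sinkSet sk tk s := ⟨k, hks, rfl⟩
    obtain ⟨P', Q', hPQ'⟩ := List.append_of_mem hek
    have hw1 := pwalk _ htkk
    rw [hPQ'] at hw1
    obtain ⟨m', hmP', hmQ'⟩ := IsWalk.split hw1
    have hnd1 := walk_simple hNC (pwalk _ htkk) (pmem _ htkk)
    rw [hPQ'] at hnd1
    have heQ' : e ∉ Q' := by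
      intro h
      have h2 := (List.nodup_cons.mp hnd1).2
      rw [List.map_append, List.map_cons] at h2
      obtain ⟨_, hRg, _⟩ := List.nodup_append.mp h2
      exact (List.nodup_cons.mp hRg).1 (List.mem_map.mpr ⟨e, h, rfl⟩)
    cases hmQ' with
    | cons hsrcm' htailm' =>
    refine (hmemR _).mpr ⟨Q'.map (fun x => (x, true)), isWalk_to_uwalk htailm', ?_⟩
    intro p hp
    obtain ⟨x, hx, rfl⟩ := List.mem_map.mp hp
    refine Finset.mem_erase.mpr ⟨fun hxe => heQ' (hxe ▸ hx), ?_⟩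
    refine pmem _ htkk x ?_
    rw [hPQ']
    exact List.mem_append.mpr (Or.inr (List.mem_cons_of_mem _ hx))
  -- cut computation
  have hcut := cut_sum (src := src) (dst := dst) f R
  have hout : ∀ e', (if src e' ∈ R ∧ dst e' ∉ R then f e' else 0) = 0 := by
    intro e'
    by_cases hc : src e' ∈ R ∧ dst e' ∉ R
    · rw [if_pos hc]
      by_contra hne0
      have he'A : e' ∈ A := mem_supp.mpr hne0
      by_cases hee : e' = e
      · subst hee; exact hsrcR hc.1
      · exact hc.2 ((hcl e' (Finset.mem_erase.mpr ⟨hee, he'A⟩)).mp hc.1)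
    · rw [if_neg hc]
  have hin : ∀ e', (if src e' ∉ R ∧ dst e' ∈ R then f e' else 0)
      = (if e' = e then f e else 0) := by
    intro e'
    by_cases hee : e' = e
    · subst hee; rw [if_pos ⟨hsrcR, hdstR⟩, if_pos rfl]
    · rw [if_neg hee]
      by_cases hc : src e' ∉ R ∧ dst e' ∈ R
      · rw [if_pos hc]
        by_contra hne0
        have he'A : e' ∈ A := mem_supp.mpr hne0
        exact hc.1 ((hcl e' (Finset.mem_erase.mpr ⟨hee, he'A⟩)).mpr hc.2)
      · rw [if_neg hc]
  have hRHS : (∑ e', ((if src e' ∈ R ∧ dst e' ∉ R then f e' else 0)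
      - (if src e' ∉ R ∧ dst e' ∈ R then f e' else 0))) = - f e := by
    simp_rw [hout, hin]
    rw [Finset.sum_sub_distrib]
    simp [Finset.sum_ite_eq' Finset.univ e (fun _ => f e)]
  have hLHS : ∑ v ∈ R, diverg src dst f v = - ∑ v ∈ R, dem v := by
    have h1 : ∀ v ∈ R, diverg src dst f v = - dem v := by
      intro v hv
      rw [hdiv v, if_neg (fun h => hsR (by rw [← h]; exact hv))]
      rw [hdem]
      ring
    rw [Finset.sum_congr rfl h1, Finset.sum_neg_distrib]
  have hfe : f e = ∑ v ∈ R, dem v := by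
    rw [hLHS, hRHS] at hcut
    linarith
  have hdemsum : ∑ v ∈ R, dem v
      = ∑ k ∈ Finset.univ.filter (fun k => sk k = s ∧ tk k ∈ R), d k := by
    rw [hdem]
    simp_rw [Finset.sum_filter]
    rw [Finset.sum_comm]
    refine Finset.sum_congr rfl fun k _ => ?_
    by_cases hks : sk k = s
    · simp only [hks, true_and]
      exact Finset.sum_ite_eq R (tk k) (fun _ => d k)
    · simp [hks]
  have hfbar : (∑ k ∈ Finset.univ.filter (fun k => sk k = s),
      if e ∈ pF (tk k) then d k else 0)
      = ∑ k ∈ Finset.univ.filter (fun k => sk k = s ∧ e ∈ pF (tk k)), d k := by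
    rw [Finset.sum_filter, Finset.sum_filter]
    refine Finset.sum_congr rfl fun k _ => ?_
    by_cases hks : sk k = s <;> simp [hks]
  rw [hfbar, hfe, hdemsum]
  refine Finset.sum_le_sum_of_subset_of_nonneg ?_ (fun k _ _ => (hd k).le)
  intro k hk
  obtain ⟨_, hks, hek⟩ := Finset.mem_filter.mp hk
  exact Finset.mem_filter.mpr ⟨Finset.mem_univ k, hks, hsinkR k hks hek⟩

end BaseCase

section Master
variable [Fintype V] [Fintype E] [DecidableEq V] [DecidableEq E]
variable {K : Type} [Fintype K]

theorem tree_decomp (sk tk : K → V) (d : K → ℝ)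
    (hd : ∀ k, 0 < d k) (hst : ∀ k, tk k ≠ sk k) (s : V) :
    ∀ (N : ℕ) (f : E → ℝ), (supp f).card ≤ N → (∀ e, 0 ≤ f e) →
    (∀ i, diverg src dst f i =
      (if i = s then ∑ k ∈ Finset.univ.filter (fun k => sk k = s), d k else 0)
        - ∑ k ∈ Finset.univ.filter (fun k => sk k = s ∧ tk k = i), d k) →
    ∃ (n : ℕ) (τ : Fin n → OutTree src dst s (sinkSet sk tk s)) (x : Fin n → ℝ),
      (∀ i, 0 ≤ x i) ∧ (∑ i, x i = 1) ∧
      ∀ e, (∑ i, fbarT src dst sk tk d s (τ i) e * x i) ≤ f e := by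
  intro N
  induction N with
  | zero =>
      intro f hcard hf0 hdiv
      have hNC : NoUCycle src dst (supp f) := by
        rintro ⟨v, L, hne, hw, hLA, hnd⟩
        obtain ⟨p, hp⟩ := List.exists_mem_of_ne_nil L hne
        have h1 := hLA p hp
        have h2 : supp f = ∅ := Finset.card_eq_zero.mp (Nat.le_zero.mp hcard)
        rw [h2] at h1
        exact absurd h1 (Finset.notMem_empty _)
      obtain ⟨τ, hτ⟩ := exists_tree sk tk d hd hst s f hf0 hdiv hNC
      exact ⟨1, fun _ => τ, fun _ => 1, fun _ => zero_le_one, by simp,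
        fun e => by simpa using hτ e⟩
  | succ N ih =>
      intro f hcard hf0 hdiv
      by_cases hcyc : ∃ (v : V) (L : List (E × Bool)), L ≠ [] ∧ UWalk src dst v v L ∧
          (∀ p ∈ L, p.1 ∈ supp f) ∧ (L.map Prod.fst).Nodup
      swap
      · obtain ⟨τ, hτ⟩ := exists_tree sk tk d hd hst s f hf0 hdiv hcyc
        exact ⟨1, fun _ => τ, fun _ => 1, fun _ => zero_le_one, by simp,
          fun e => by simpa using hτ e⟩
      obtain ⟨v, L, hLne, hw, hLA, hnd⟩ := hcyc
      classical
      have hnotboth : ∀ e : E, ((e, true) : E × Bool) ∈ L → ((e, false) : E × Bool) ∈ L → False := by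
        intro e h1 h2
        have := List.inj_on_of_nodup_map hnd h1 h2 rfl
        simp at this
      have hdivd : ∀ w, diverg src dst (delta L) w = 0 := by
        intro w
        rw [diverg_delta hw hnd w]
        ring
      set Fwd : Finset E := Finset.univ.filter (fun e => ((e, true) : E × Bool) ∈ L) with hFwd
      set Bwd : Finset E := Finset.univ.filter (fun e => ((e, false) : E × Bool) ∈ L) with hBwd
      have hmemF : ∀ e, e ∈ Fwd ↔ ((e, true) : E × Bool) ∈ L := by
        intro e; simp [hFwd]
      have hmemB : ∀ e, e ∈ Bwd ↔ ((e, false) : E × Bool) ∈ L := by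
        intro e; simp [hBwd]
      have hFB : ∀ e, e ∈ Fwd → e ∈ Bwd → False := by
        intro e h1 h2; exact hnotboth e ((hmemF e).mp h1) ((hmemB e).mp h2)
      have hdel : ∀ e, delta L e
          = (if e ∈ Fwd then (1:ℝ) else 0) - (if e ∈ Bwd then (1:ℝ) else 0) := by
        intro e
        rw [delta]
        congr 1
        · by_cases h : ((e, true) : E × Bool) ∈ L
          · rw [if_pos h, if_pos ((hmemF e).mpr h)]
          · rw [if_neg h, if_neg (fun hh => h ((hmemF e).mp hh))]
        · by_cases h : ((e, false) : E × Bool) ∈ L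
          · rw [if_pos h, if_pos ((hmemB e).mpr h)]
          · rw [if_neg h, if_neg (fun hh => h ((hmemB e).mp hh))]
      have hFsupp : ∀ e, e ∈ Fwd → e ∈ supp f := by
        intro e h; exact hLA _ ((hmemF e).mp h)
      have hBsupp : ∀ e, e ∈ Bwd → e ∈ supp f := by
        intro e h; exact hLA _ ((hmemB e).mp h)
      have hpos : ∀ e ∈ supp f, 0 < f e := by
        intro e he
        exact lt_of_le_of_ne (hf0 e) (Ne.symm (mem_supp.mp he))
      -- generic single-sided cancellation
      have hcancel : ∀ (θ : ℝ) (σ : ℝ) (e0 : E), 0 < θ → (σ = 1 ∨ σ = -1) →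
          f e0 + θ * (σ * delta L e0) = 0 → e0 ∈ supp f →
          (∀ e, 0 ≤ f e + θ * (σ * delta L e)) →
          (∀ e, delta L e ≠ 0 → e ∈ supp f) →
          ∃ (n : ℕ) (τ : Fin n → OutTree src dst s (sinkSet sk tk s)) (x : Fin n → ℝ),
            (∀ i, 0 ≤ x i) ∧ (∑ i, x i = 1) ∧
            ∀ e, (∑ i, fbarT src dst sk tk d s (τ i) e * x i)
              ≤ f e + θ * (σ * delta L e) := by
        intro θ σ e0 hθ hσ he0 he0supp hf'0 hdsupp
        set f' : E → ℝ := fun e => f e + θ * (σ * delta L e) with hf'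
        have hdiv' : ∀ i, diverg src dst f' i = diverg src dst f i := by
          intro i
          have heq : f' = fun e => f e + (θ * σ) * delta L e := by
            funext e; rw [hf']; ring
          rw [heq, diverg_add, diverg_mul, hdivd]
          ring
        have hsub : supp f' ⊆ supp f := by
          intro e he
          by_cases hde : delta L e = 0
          · have : f' e = f e := by rw [hf']; simp [hde]
            rw [mem_supp] at he ⊢
            rw [← this]; exact he
          · exact hdsupp e hde
        have hss : supp f' ⊂ supp f := by
          rw [Finset.ssubset_iff_of_subset hsub]
          refine ⟨e0, he0supp, ?_⟩
          rw [mem_supp, hf']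
          simp [he0]
        have hcard' : (supp f').card ≤ N :=
          Nat.lt_succ_iff.mp (lt_of_lt_of_le (Finset.card_lt_card hss) hcard)
        obtain ⟨n, τ, x, hx0, hx1, hxle⟩ := ih f' hcard' hf'0
          (fun i => (hdiv' i).trans (hdiv i))
        exact ⟨n, τ, x, hx0, hx1, hxle⟩
      by_cases hB : Bwd = ∅
      · -- all-forward cycle: subtract
        have hFne : Fwd.Nonempty := by
          obtain ⟨p, hp⟩ := List.exists_mem_of_ne_nil L hLne
          obtain ⟨pe, pb⟩ := p
          cases pb
          · exact absurd ((hmemB pe).mpr hp) (by simp [hB])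
          · exact ⟨pe, (hmemF pe).mpr hp⟩
        obtain ⟨e0, he0F, he0min⟩ := Finset.exists_min_image Fwd f hFne
        have hθ : 0 < f e0 := hpos e0 (hFsupp e0 he0F)
        have hdel' : ∀ e, delta L e = if e ∈ Fwd then (1:ℝ) else 0 := by
          intro e
          rw [hdel e]
          have hnB : e ∉ Bwd := by rw [hB]; exact Finset.notMem_empty _
          rw [if_neg hnB]
          ring
        obtain ⟨n, τ, x, hx0, hx1, hxle⟩ := hcancel (f e0) (-1) e0 hθ (Or.inr rfl)
          (by rw [hdel' e0, if_pos he0F]; ring)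
          (hFsupp e0 he0F)
          (by
            intro e
            rw [hdel' e]
            by_cases h : e ∈ Fwd
            · rw [if_pos h]
              have := he0min e h
              nlinarith
            · rw [if_neg h]
              have := hf0 e
              nlinarith)
          (by
            intro e hde
            rw [hdel' e] at hde
            by_cases h : e ∈ Fwd
            · exact hFsupp e h
            · rw [if_neg h] at hde; exact absurd rfl hde)
        refine ⟨n, τ, x, hx0, hx1, fun e => le_trans (hxle e) ?_⟩
        rw [hdel' e]
        by_cases h : e ∈ Fwd
        · rw [if_pos h]
          nlinarith
        · rw [if_neg h]
          nlinarith
      by_cases hF : Fwd = ∅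
      · -- all-backward cycle: add
        have hBne : Bwd.Nonempty := by
          obtain ⟨p, hp⟩ := List.exists_mem_of_ne_nil L hLne
          obtain ⟨pe, pb⟩ := p
          cases pb
          · exact ⟨pe, (hmemB pe).mpr hp⟩
          · exact absurd ((hmemF pe).mpr hp) (by simp [hF])
        obtain ⟨e0, he0B, he0min⟩ := Finset.exists_min_image Bwd f hBne
        have hθ : 0 < f e0 := hpos e0 (hBsupp e0 he0B)
        have hdel' : ∀ e, delta L e = if e ∈ Bwd then (-1:ℝ) else 0 := by
          intro e
          rw [hdel e]
          have hnF : e ∉ Fwd := by rw [hF]; exact Finset.notMem_empty _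
          rw [if_neg hnF]
          by_cases h : e ∈ Bwd <;> simp [h]
        obtain ⟨n, τ, x, hx0, hx1, hxle⟩ := hcancel (f e0) 1 e0 hθ (Or.inl rfl)
          (by rw [hdel' e0, if_pos he0B]; ring)
          (hBsupp e0 he0B)
          (by
            intro e
            rw [hdel' e]
            by_cases h : e ∈ Bwd
            · rw [if_pos h]
              have := he0min e h
              nlinarith
            · rw [if_neg h]
              have := hf0 e
              nlinarith)
          (by
            intro e hde
            rw [hdel' e] at hde
            by_cases h : e ∈ Bwd
            · exact hBsupp e h
            · rw [if_neg h] at hde; exact absurd rfl hde)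
        refine ⟨n, τ, x, hx0, hx1, fun e => le_trans (hxle e) ?_⟩
        rw [hdel' e]
        by_cases h : e ∈ Bwd
        · rw [if_pos h]
          nlinarith
        · rw [if_neg h]
          nlinarith
      · -- mixed cycle: convex split
        have hBne : Bwd.Nonempty := Finset.nonempty_of_ne_empty hB
        have hFne : Fwd.Nonempty := Finset.nonempty_of_ne_empty hF
        obtain ⟨e1, he1B, he1min⟩ := Finset.exists_min_image Bwd f hBne
        obtain ⟨e2, he2F, he2min⟩ := Finset.exists_min_image Fwd f hFne
        have ht1 : 0 < f e1 := hpos e1 (hBsupp e1 he1B)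
        have ht2 : 0 < f e2 := hpos e2 (hFsupp e2 he2F)
        have hsum : 0 < f e1 + f e2 := by linarith
        set a : ℝ := f e2 / (f e1 + f e2) with ha
        set b : ℝ := f e1 / (f e1 + f e2) with hb
        have ha0 : 0 < a := div_pos ht2 hsum
        have hb0 : 0 < b := div_pos ht1 hsum
        have hne := hsum.ne'
        have hab : a + b = 1 := by
          rw [ha, hb, ← add_div, add_comm (f e2) (f e1)]
          exact div_self hne
        have hdsupp : ∀ e, delta L e ≠ 0 → e ∈ supp f := by
          intro e hde
          rw [hdel e] at hde
          by_cases h1 : e ∈ Fwd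
          · exact hFsupp e h1
          · by_cases h2 : e ∈ Bwd
            · exact hBsupp e h2
            · rw [if_neg h1, if_neg h2] at hde; exact absurd (by ring) hde
        have key : ∀ (θ : ℝ) (σ : ℝ) (e0 : E), 0 < θ → (σ = 1 ∨ σ = -1) →
            f e0 + θ * (σ * delta L e0) = 0 → e0 ∈ supp f →
            (∀ e, 0 ≤ f e + θ * (σ * delta L e)) →
            ∃ (n : ℕ) (τ : Fin n → OutTree src dst s (sinkSet sk tk s)) (x : Fin n → ℝ),
              (∀ i, 0 ≤ x i) ∧ (∑ i, x i = 1) ∧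
              ∀ e, (∑ i, fbarT src dst sk tk d s (τ i) e * x i)
                ≤ f e + θ * (σ * delta L e) :=
          fun θ σ e0 h1 h2 h3 h4 h5 => hcancel θ σ e0 h1 h2 h3 h4 h5 hdsupp
        have hd1 : delta L e1 = -1 := by
          rw [hdel e1, if_pos he1B, if_neg (fun h => hFB e1 h he1B)]
          ring
        have hd2 : delta L e2 = 1 := by
          rw [hdel e2, if_pos he2F, if_neg (fun h => hFB e2 he2F h)]
          ring
        have hnn : ∀ e, 0 ≤ f e + f e1 * (1 * delta L e) := by
          intro e
          rw [hdel e]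
          by_cases h1 : e ∈ Fwd
          · rw [if_pos h1, if_neg (fun h => hFB e h1 h)]
            have := hf0 e
            nlinarith
          · rw [if_neg h1]
            by_cases h2 : e ∈ Bwd
            · rw [if_pos h2]
              have := he1min e h2
              nlinarith
            · rw [if_neg h2]
              have := hf0 e
              nlinarith
        have hnn2 : ∀ e, 0 ≤ f e + f e2 * ((-1) * delta L e) := by
          intro e
          rw [hdel e]
          by_cases h1 : e ∈ Fwd
          · rw [if_pos h1, if_neg (fun h => hFB e h1 h)]
            have := he2min e h1
            nlinarith
          · rw [if_neg h1]
            by_cases h2 : e ∈ Bwd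
            · rw [if_pos h2]
              have := hf0 e
              nlinarith
            · rw [if_neg h2]
              have := hf0 e
              nlinarith
        obtain ⟨n1, τ1, x1, hx10, hx11, hx1le⟩ := key (f e1) 1 e1 ht1 (Or.inl rfl)
          (by rw [hd1]; ring) (hBsupp e1 he1B) hnn
        obtain ⟨n2, τ2, x2, hx20, hx21, hx2le⟩ := key (f e2) (-1) e2 ht2 (Or.inr rfl)
          (by rw [hd2]; ring) (hFsupp e2 he2F) hnn2
        refine ⟨n1 + n2, Fin.append τ1 τ2,
          Fin.append (fun i => a * x1 i) (fun i => b * x2 i), ?_, ?_, ?_⟩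
        · intro i
          refine Fin.addCases ?_ ?_ i
          · intro j
            simp only [Fin.append_left]
            exact mul_nonneg ha0.le (hx10 j)
          · intro j
            simp only [Fin.append_right]
            exact mul_nonneg hb0.le (hx20 j)
        · rw [Fin.sum_univ_add]
          simp only [Fin.append_left, Fin.append_right]
          rw [← Finset.mul_sum, ← Finset.mul_sum, hx11, hx21, mul_one, mul_one, hab]
        · intro e
          rw [Fin.sum_univ_add]
          simp only [Fin.append_left, Fin.append_right]
          have hA : (∑ i : Fin n1, fbarT src dst sk tk d s (τ1 i) e * (a * x1 i))
              = a * ∑ i : Fin n1, fbarT src dst sk tk d s (τ1 i) e * x1 i := by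
            rw [Finset.mul_sum]
            exact Finset.sum_congr rfl fun i _ => by ring
          have hB2 : (∑ i : Fin n2, fbarT src dst sk tk d s (τ2 i) e * (b * x2 i))
              = b * ∑ i : Fin n2, fbarT src dst sk tk d s (τ2 i) e * x2 i := by
            rw [Finset.mul_sum]
            exact Finset.sum_congr rfl fun i _ => by ring
          rw [hA, hB2]
          have h1 := mul_le_mul_of_nonneg_left (hx1le e) ha0.le
          have h2 := mul_le_mul_of_nonneg_left (hx2le e) hb0.le
          have hkey : a * f e1 = b * f e2 := by
            rw [ha, hb]
            field_simp
          have hfin : a * (f e + f e1 * (1 * delta L e))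
              + b * (f e + f e2 * (-1 * delta L e)) = f e := by
            linear_combination (f e) * hab + delta L e * hkey
          linarith

end Master

section Fbar
variable [Fintype V] [Fintype E] [DecidableEq V] [DecidableEq E]
variable {K : Type} [Fintype K]

theorem fbar_nonneg (sk tk : K → V) (d : K → ℝ) (hd : ∀ k, 0 < d k) (s : V)
    (τ : OutTree src dst s (sinkSet sk tk s)) (e : E) :
    0 ≤ fbarT src dst sk tk d s τ e := by
  refine Finset.sum_nonneg fun k _ => ?_
  by_cases h : e ∈ τ.pathTo (tk k) <;> simp [h, (hd k).le]

theorem fbar_zero (sk tk : K → V) (d : K → ℝ) (s : V)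
    (τ : OutTree src dst s (sinkSet sk tk s)) {e : E} (he : e ∉ τ.edges) :
    fbarT src dst sk tk d s τ e = 0 := by
  refine Finset.sum_eq_zero fun k hk => ?_
  rw [if_neg]
  intro hmem
  exact he (τ.mem_edges (tk k) ⟨k, (Finset.mem_filter.mp hk).2, rfl⟩ e hmem)

theorem diverg_fbar (sk tk : K → V) (d : K → ℝ) (s : V)
    (τ : OutTree src dst s (sinkSet sk tk s)) (i : V) :
    diverg src dst (fbarT src dst sk tk d s τ) i =
      (if i = s then ∑ k ∈ Finset.univ.filter (fun k => sk k = s), d k else 0)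
        - ∑ k ∈ Finset.univ.filter (fun k => sk k = s ∧ tk k = i), d k := by
  classical
  have h0 : fbarT src dst sk tk d s τ = fun e =>
      ∑ k ∈ Finset.univ.filter (fun k => sk k = s),
        (if e ∈ τ.pathTo (tk k) then d k else 0) := rfl
  rw [h0, diverg_finsum]
  have h1 : ∀ k ∈ Finset.univ.filter (fun k => sk k = s),
      diverg src dst (fun e => if e ∈ τ.pathTo (tk k) then d k else 0) i
        = (if s = i then d k else 0) - (if tk k = i then d k else 0) := by
    intro k hk
    have hks : sk k = s := (Finset.mem_filter.mp hk).2
    have htk : tk k ∈ sinkSet sk tk s := ⟨k, hks, rfl⟩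
    have hwalk := τ.walk_pathTo (tk k) htk
    have hnd : (τ.pathTo (tk k)).Nodup := by
      have := τ.nodup_verts (tk k) htk
      exact ((List.nodup_cons.mp this).2).of_map
    exact diverg_walk_ind hwalk hnd (d k) i
  rw [Finset.sum_congr rfl h1, Finset.sum_sub_distrib]
  congr 1
  · by_cases his : i = s
    · subst his
      rw [if_pos rfl]
      exact Finset.sum_congr rfl fun k _ => if_pos rfl
    · rw [if_neg his]
      exact Finset.sum_eq_zero fun k _ => if_neg (fun h => his h.symm)
  · rw [Finset.sum_filter, Finset.sum_filter]
    refine Finset.sum_congr rfl fun k _ => ?_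
    by_cases h1 : sk k = s <;> by_cases h2 : tk k = i <;> simp [h1, h2]

end Fbar

end MyProof

/-- exactness of the tree-based decomposition: provided the
source-based LP is feasible, the optimal value of the tree-based LP (over
convex combinations of trees rooted at the sources, subject to the tree
capacity constraints) equals the optimal value of the source-based LP. -/
theorem stmt8 {V E K : Type} [Fintype V] [Fintype E] [Fintype K]
    [DecidableEq V] [DecidableEq E]
    (src dst : E → V) (c u : E → ℝ) (hc : ∀ e, 0 ≤ c e)
    (sk tk : K → V) (d : K → ℝ) (hd : ∀ k, 0 < d k) (hst : ∀ k, tk k ≠ sk k)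
    (S : Finset V) (hS : S = Finset.image sk Finset.univ)
    (hfeas : ∃ g : V → E → ℝ, SourceFeasible src dst u sk tk d g) :
    sInf {z : ℝ | ∃ (n : V → ℕ)
        (τ : ∀ s : V, Fin (n s) → OutTree src dst s (sinkSet sk tk s))
        (x : ∀ s : V, Fin (n s) → ℝ),
        (∀ s i, 0 ≤ x s i) ∧
        (∀ s ∈ S, ∑ i, x s i = 1) ∧
        (∀ e : E, ∑ s ∈ S, ∑ i,
            fbarT src dst sk tk d s (τ s i) e * x s i ≤ u e) ∧
        z = ∑ s ∈ S, ∑ i,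
            (∑ e ∈ (τ s i).edges, fbarT src dst sk tk d s (τ s i) e * c e)
              * x s i}
      = sInf {z : ℝ | ∃ g : V → E → ℝ, SourceFeasible src dst u sk tk d g ∧
          z = ∑ s : V, ∑ e : E, c e * g s e} := by
  classical
  subst hS
  set S := Finset.image sk Finset.univ with hS
  -- the tree-LP feasible set
  set TS : Set ℝ := {z : ℝ | ∃ (n : V → ℕ)
      (τ : ∀ s : V, Fin (n s) → OutTree src dst s (sinkSet sk tk s))
      (x : ∀ s : V, Fin (n s) → ℝ),
      (∀ s i, 0 ≤ x s i) ∧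
      (∀ s ∈ S, ∑ i, x s i = 1) ∧
      (∀ e : E, ∑ s ∈ S, ∑ i,
          fbarT src dst sk tk d s (τ s i) e * x s i ≤ u e) ∧
      z = ∑ s ∈ S, ∑ i,
          (∑ e ∈ (τ s i).edges, fbarT src dst sk tk d s (τ s i) e * c e)
            * x s i} with hTS
  set FS : Set ℝ := {z : ℝ | ∃ g : V → E → ℝ, SourceFeasible src dst u sk tk d g ∧
      z = ∑ s : V, ∑ e : E, c e * g s e} with hFS
  have bddTS : ∀ z ∈ TS, (0:ℝ) ≤ z := by
    rintro z ⟨n, τ, x, hx0, hx1, hcap, rfl⟩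
    refine Finset.sum_nonneg fun s _ => Finset.sum_nonneg fun i _ => ?_
    refine mul_nonneg (Finset.sum_nonneg fun e _ => ?_) (hx0 s i)
    exact mul_nonneg (MyProof.fbar_nonneg sk tk d hd s (τ s i) e) (hc e)
  have bddFS : ∀ z ∈ FS, (0:ℝ) ≤ z := by
    rintro z ⟨g, hg, rfl⟩
    exact Finset.sum_nonneg fun s _ => Finset.sum_nonneg fun e _ =>
      mul_nonneg (hc e) (hg.1 s e)
  -- sub : TS ⊆ FS
  have sub : TS ⊆ FS := by
    rintro z ⟨n, τ, x, hx0, hx1, hcap, rfl⟩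
    set g : V → E → ℝ := fun s => if s ∈ S then
        (fun e => ∑ i, fbarT src dst sk tk d s (τ s i) e * x s i) else 0 with hg
    have hgval : ∀ s ∈ S, ∀ e, g s e
        = ∑ i, fbarT src dst sk tk d s (τ s i) e * x s i := by
      intro s hs e; rw [hg]; simp [hs]
    have hgzero : ∀ s ∉ S, g s = 0 := by
      intro s hs; rw [hg]; simp [hs]
    have hgnn : ∀ s e, 0 ≤ g s e := by
      intro s e
      by_cases hs : s ∈ S
      · rw [hgval s hs e]
        exact Finset.sum_nonneg fun i _ =>
          mul_nonneg (MyProof.fbar_nonneg sk tk d hd s (τ s i) e) (hx0 s i)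
      · rw [hgzero s hs]; simp
    refine ⟨g, ⟨hgnn, fun s hs => hgzero s (by rwa [← hS] at hs), ?_, ?_⟩, ?_⟩
    · -- divergence
      intro s hs i
      rw [← hS] at hs
      have hfun : g s = fun e => ∑ j, fbarT src dst sk tk d s (τ s j) e * x s j := by
        funext e; exact hgval s hs e
      rw [hfun, MyProof.diverg_finsum]
      have hper : ∀ j : Fin (n s), diverg src dst
          (fun e => fbarT src dst sk tk d s (τ s j) e * x s j) i
          = ((if i = s then ∑ k ∈ Finset.univ.filter (fun k => sk k = s), d k else 0)
              - ∑ k ∈ Finset.univ.filter (fun k => sk k = s ∧ tk k = i), d k) * x s j := by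
        intro j
        have hcomm : (fun e => fbarT src dst sk tk d s (τ s j) e * x s j)
            = fun e => x s j * fbarT src dst sk tk d s (τ s j) e := by
          funext e; ring
        rw [hcomm, MyProof.diverg_mul, MyProof.diverg_fbar sk tk d s (τ s j) i]
        ring
      rw [Finset.sum_congr rfl (fun j _ => hper j), ← Finset.mul_sum, hx1 s hs, mul_one]
    · -- capacity
      intro e
      have h1 : ∀ s : V, g s e = if s ∈ S then
          ∑ i, fbarT src dst sk tk d s (τ s i) e * x s i else 0 := by
        intro s
        by_cases hs : s ∈ S
        · rw [hgval s hs e, if_pos hs]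
        · rw [hgzero s hs, if_neg hs]; simp
      have h2 : ∑ s : V, g s e
          = ∑ s : V, (if s ∈ S then ∑ i, fbarT src dst sk tk d s (τ s i) e * x s i
              else 0) := Finset.sum_congr rfl fun s _ => h1 s
      rw [h2, Finset.sum_ite_mem, Finset.univ_inter]
      exact hcap e
    · -- cost value
      have hz : ∑ s : V, ∑ e : E, c e * g s e = ∑ s ∈ S, ∑ e : E, c e * g s e := by
        refine (Finset.sum_subset (Finset.subset_univ S) ?_).symm
        intro s _ hs
        rw [hgzero s hs]
        simp
      rw [hz]
      refine Finset.sum_congr rfl fun s hs => ?_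
      have hedge : ∀ i : Fin (n s), (∑ e ∈ (τ s i).edges,
          fbarT src dst sk tk d s (τ s i) e * c e)
          = ∑ e : E, fbarT src dst sk tk d s (τ s i) e * c e := by
        intro i
        refine Finset.sum_subset (Finset.subset_univ _) ?_
        intro e _ he
        rw [MyProof.fbar_zero sk tk d s (τ s i) he, zero_mul]
      calc ∑ i, (∑ e ∈ (τ s i).edges, fbarT src dst sk tk d s (τ s i) e * c e) * x s i
          = ∑ i, ∑ e : E, fbarT src dst sk tk d s (τ s i) e * c e * x s i := by
            refine Finset.sum_congr rfl fun i _ => ?_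
            rw [hedge i, Finset.sum_mul]
        _ = ∑ e : E, ∑ i, fbarT src dst sk tk d s (τ s i) e * c e * x s i :=
            Finset.sum_comm
        _ = ∑ e : E, c e * g s e := by
            refine Finset.sum_congr rfl fun e _ => ?_
            rw [hgval s hs e, Finset.mul_sum]
            refine Finset.sum_congr rfl fun i _ => by ring
  -- main decomposition: from a feasible flow to a tree solution of no larger cost
  have main : ∀ g, SourceFeasible src dst u sk tk d g →
      ∃ a, a ∈ TS ∧ a ≤ ∑ s : V, ∑ e : E, c e * g s e := by
    intro g hgfeas
    obtain ⟨hg0, hgS, hgdiv, hgcap⟩ := hgfeas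
    have hdec : ∀ s : V, ∃ (n : ℕ)
        (τ : Fin n → OutTree src dst s (sinkSet sk tk s)) (x : Fin n → ℝ),
        (∀ i, 0 ≤ x i) ∧ (s ∈ S → ∑ i, x i = 1) ∧
        (∀ e, ∑ i, fbarT src dst sk tk d s (τ i) e * x i ≤ g s e) := by
      intro s
      by_cases hs : s ∈ S
      · obtain ⟨n, τ, x, h0, h1, hle⟩ := MyProof.tree_decomp sk tk d hd hst s
          (MyProof.supp (g s)).card (g s) le_rfl (hg0 s) (hgdiv s (by rwa [hS] at hs))
        exact ⟨n, τ, x, h0, fun _ => h1, hle⟩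
      · refine ⟨0, Fin.elim0, Fin.elim0, fun i => i.elim0, fun h => absurd h hs, ?_⟩
        intro e
        have : g s = 0 := hgS s (by rwa [hS] at hs)
        rw [this]
        simp
    choose n τ x hx0 hx1 hxle using hdec
    refine ⟨∑ s ∈ S, ∑ i, (∑ e ∈ (τ s i).edges,
        fbarT src dst sk tk d s (τ s i) e * c e) * x s i,
      ⟨n, τ, x, hx0, fun s hs => hx1 s hs, ?_, rfl⟩, ?_⟩
    · intro e
      calc ∑ s ∈ S, ∑ i, fbarT src dst sk tk d s (τ s i) e * x s i
          ≤ ∑ s ∈ S, g s e := Finset.sum_le_sum fun s _ => hxle s e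
        _ ≤ ∑ s : V, g s e := Finset.sum_le_sum_of_subset_of_nonneg
            (Finset.subset_univ _) (fun s _ _ => hg0 s e)
        _ ≤ u e := hgcap e
    · refine le_trans (Finset.sum_le_sum ?_)
        (Finset.sum_le_sum_of_subset_of_nonneg (Finset.subset_univ _)
          (fun s _ _ => Finset.sum_nonneg fun e _ => mul_nonneg (hc e) (hg0 s e)))
      intro s _
      have hedge : ∀ i : Fin (n s), (∑ e ∈ (τ s i).edges,
          fbarT src dst sk tk d s (τ s i) e * c e)
          = ∑ e : E, fbarT src dst sk tk d s (τ s i) e * c e := by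
        intro i
        refine Finset.sum_subset (Finset.subset_univ _) ?_
        intro e _ he
        rw [MyProof.fbar_zero sk tk d s (τ s i) he, zero_mul]
      calc ∑ i, (∑ e ∈ (τ s i).edges, fbarT src dst sk tk d s (τ s i) e * c e) * x s i
          = ∑ i, ∑ e : E, fbarT src dst sk tk d s (τ s i) e * c e * x s i := by
            refine Finset.sum_congr rfl fun i _ => ?_
            rw [hedge i, Finset.sum_mul]
        _ = ∑ e : E, ∑ i, fbarT src dst sk tk d s (τ s i) e * c e * x s i :=
            Finset.sum_comm
        _ = ∑ e : E, c e * ∑ i, fbarT src dst sk tk d s (τ s i) e * x s i := by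
            refine Finset.sum_congr rfl fun e _ => ?_
            rw [Finset.mul_sum]
            refine Finset.sum_congr rfl fun i _ => by ring
        _ ≤ ∑ e : E, c e * g s e := Finset.sum_le_sum fun e _ =>
            mul_le_mul_of_nonneg_left (hxle s e) (hc e)
  obtain ⟨g0, hg0feas⟩ := hfeas
  refine le_antisymm ?_ ?_
  · refine le_csInf ⟨_, ⟨g0, hg0feas, rfl⟩⟩ ?_
    rintro b ⟨g, hg, rfl⟩
    obtain ⟨a, haTS, hab⟩ := main g hg
    exact le_trans (csInf_le ⟨0, fun z hz => bddTS z hz⟩ haTS) hab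
  · obtain ⟨a, haTS, _⟩ := main g0 hg0feas
    exact csInf_le_csInf ⟨0, fun z hz => bddFS z hz⟩ ⟨a, haTS⟩ sub
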